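/- Define f_O : ℝ → ℝ by f_O(x) = −1/(16x) if x < −1/4, f_O(x) = 1 − 1/(16x) if x > 1/4, and f_O(x) = x + 1/2 otherwise. Then f_O is a 1-Lipschitz continuous sigmoid function (continuous, non-decreasing, f_O(x) + f_O(−x) = 1, limits 0 and 1 at ∓∞), the map x ↦ x·f_O(−x) is monotonically non-decreasing, and sup_{x>0} x·f_O(−x) = 1/16. -/

import Mathlib

open Filter

noncomputable def fO (x : ℝ) : ℝ :=
  if x < -(1/4) then -1/(16*x)
  else if (1/4 : ℝ) < x then 1 - 1/(16*x)
  else x + 1/2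

lemma fO_left {x : ℝ} (h : x < -(1/4)) : fO x = -1/(16*x) := if_pos h

lemma fO_mid {x : ℝ} (h1 : -(1/4) ≤ x) (h2 : x ≤ 1/4) : fO x = x + 1/2 := by
  rw [fO, if_neg (not_lt.2 h1), if_neg (not_lt.2 h2)]

lemma fO_right {x : ℝ} (h : (1/4:ℝ) < x) : fO x = 1 - 1/(16*x) := by
  rw [fO, if_neg (by linarith), if_pos h]

lemma fO_left_le {x : ℝ} (h : x < -(1/4)) : fO x ≤ 1/4 := by
  rw [fO_left h, div_le_iff_of_neg (by linarith : 16*x < 0)]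
  linarith

lemma fO_right_ge {x : ℝ} (h : (1/4:ℝ) < x) : 3/4 ≤ fO x := by
  rw [fO_right h]
  have h1 : 1/(16*x) ≤ 1/4 := by
    rw [div_le_div_iff₀ (by linarith) (by norm_num)]
    linarith
  linarith

lemma fO_mono : Monotone fO := by
  intro x y hxy
  rcases lt_or_ge x (-(1/4)) with hx | hx
  · rcases lt_or_ge y (-(1/4)) with hy | hy
    · rw [fO_left hx, fO_left hy]
      have hx0 : x ≠ 0 := by intro h; rw [h] at hx; norm_num at hx
      have hy0 : y ≠ 0 := by intro h; rw [h] at hy; norm_num at hy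
      have key : -1/(16*y) - (-1/(16*x)) = (y-x)/(16*(x*y)) := by
        field_simp; ring
      have h1 : (0:ℝ) ≤ (y-x)/(16*(x*y)) :=
        div_nonneg (by linarith) (by nlinarith)
      linarith
    · rcases lt_or_ge (1/4:ℝ) y with hy2 | hy2
      · linarith [fO_left_le hx, fO_right_ge hy2]
      · rw [fO_mid hy hy2]
        linarith [fO_left_le hx]
  · rcases le_or_gt y (1/4) with hy2 | hy2
    · rw [fO_mid hx (by linarith), fO_mid (by linarith) hy2]
      linarith
    · rcases le_or_gt x (1/4) with hx2 | hx2
      · rw [fO_mid hx hx2]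
        linarith [fO_right_ge hy2]
      · rw [fO_right hx2, fO_right hy2]
        have h1 : 1/(16*y) ≤ 1/(16*x) := by
          rw [div_le_div_iff₀ (by linarith) (by linarith)]
          linarith
        linarith

lemma sub_fO_mono : Monotone (fun x => x - fO x) := by
  intro x y hxy
  simp only
  rcases lt_or_ge x (-(1/4)) with hx | hx
  · have hx0 : x ≠ 0 := by intro h; rw [h] at hx; norm_num at hx
    rcases lt_or_ge y (-(1/4)) with hy | hy
    · have hy0 : y ≠ 0 := by intro h; rw [h] at hy; norm_num at hy
      rw [fO_left hx, fO_left hy]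
      have key : (y - (-1/(16*y))) - (x - (-1/(16*x))) = (y-x)*(16*(x*y)-1)/(16*(x*y)) := by
        field_simp; ring
      have h1 : (0:ℝ) ≤ (y-x)*(16*(x*y)-1)/(16*(x*y)) :=
        div_nonneg (mul_nonneg (by linarith) (by nlinarith)) (by nlinarith)
      linarith
    · -- x - fO x ≤ -1/2 ≤ y - fO y
      have hxle : x - fO x ≤ -(1/2) := by
        rw [fO_left hx]
        have key : x - (-1/(16*x)) + 1/2 = (4*x+1)^2/(16*x) := by
          field_simp; ring
        have h1 : (4*x+1)^2/(16*x) ≤ 0 :=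
          div_nonpos_of_nonneg_of_nonpos (sq_nonneg _) (by linarith)
        linarith
      have hyge : -(1/2) ≤ y - fO y := by
        rcases le_or_gt y (1/4) with hy2 | hy2
        · rw [fO_mid hy hy2]; linarith
        · have hy0 : y ≠ 0 := by intro hh; rw [hh] at hy2; norm_num at hy2
          rw [fO_right hy2]
          have key : y - (1 - 1/(16*y)) + 1/2 = (4*y-1)^2/(16*y) := by
            field_simp; ring
          have h1 : (0:ℝ) ≤ (4*y-1)^2/(16*y) :=
            div_nonneg (sq_nonneg _) (by linarith)
          linarith
      linarith
  · rcases le_or_gt y (1/4) with hy2 | hy2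
    · rw [fO_mid hx (by linarith), fO_mid (by linarith) hy2]
      ring_nf
      linarith
    · rcases le_or_gt x (1/4) with hx2 | hx2
      · rw [fO_mid hx hx2, fO_right hy2]
        have key : y - (1 - 1/(16*y)) + 1/2 = (4*y-1)^2/(16*y) := by
          field_simp; ring
        have h1 : (0:ℝ) ≤ (4*y-1)^2/(16*y) :=
          div_nonneg (sq_nonneg _) (by linarith)
        linarith
      · rw [fO_right hx2, fO_right hy2]
        have key : (y - (1 - 1/(16*y))) - (x - (1 - 1/(16*x))) = (y-x)*(16*(x*y)-1)/(16*(x*y)) := by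
          field_simp; ring
        have h1 : (0:ℝ) ≤ (y-x)*(16*(x*y)-1)/(16*(x*y)) :=
          div_nonneg (mul_nonneg (by linarith) (by nlinarith)) (by nlinarith)
        linarith

lemma fO_sym (x : ℝ) : fO x + fO (-x) = 1 := by
  rcases lt_or_ge x (-(1/4)) with hx | hx
  · have hx0 : x ≠ 0 := by intro h; rw [h] at hx; norm_num at hx
    rw [fO_left hx, fO_right (by linarith : (1/4:ℝ) < -x)]
    field_simp
    ring
  · rcases le_or_gt x (1/4) with hx2 | hx2
    · rw [fO_mid hx hx2, fO_mid (by linarith) (by linarith)]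
      ring
    · have hx0 : x ≠ 0 := by intro h; rw [h] at hx2; norm_num at hx2
      rw [fO_right hx2, fO_left (by linarith : -x < -(1/4))]
      field_simp
      ring

lemma gL {x : ℝ} (h : x < -(1/4)) : x * fO (-x) = x + 1/16 := by
  have hx0 : x ≠ 0 := by intro hh; rw [hh] at h; norm_num at h
  rw [fO_right (by linarith : (1/4:ℝ) < -x)]
  field_simp
  ring

lemma gM {x : ℝ} (h1 : -(1/4) ≤ x) (h2 : x ≤ 1/4) : x * fO (-x) = x/2 - x^2 := by
  rw [fO_mid (by linarith) (by linarith)]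
  ring

lemma gP {x : ℝ} (h : (1/4:ℝ) < x) : x * fO (-x) = 1/16 := by
  have hx0 : x ≠ 0 := by intro hh; rw [hh] at h; norm_num at h
  rw [fO_left (by linarith : -x < -(1/4))]
  field_simp

lemma g_mono : Monotone (fun x : ℝ => x * fO (-x)) := by
  intro x y hxy
  simp only
  rcases lt_or_ge x (-(1/4)) with hx | hx
  · rcases lt_or_ge y (-(1/4)) with hy | hy
    · rw [gL hx, gL hy]; linarith
    · rcases le_or_gt y (1/4) with hy2 | hy2
      · rw [gL hx, gM hy hy2]
        nlinarith [mul_nonneg (by linarith : (0:ℝ) ≤ y + 1/4) (by linarith : (0:ℝ) ≤ 3/4 - y)]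
      · rw [gL hx, gP hy2]; linarith
  · rcases le_or_gt y (1/4) with hy2 | hy2
    · rw [gM hx (by linarith), gM (by linarith) hy2]
      nlinarith [mul_nonneg (by linarith : (0:ℝ) ≤ y - x) (by linarith : (0:ℝ) ≤ 1/2 - (x+y))]
    · rcases le_or_gt x (1/4) with hx2 | hx2
      · rw [gM hx hx2, gP hy2]
        nlinarith [sq_nonneg (x - 1/4)]
      · rw [gP hx2, gP hy2]

lemma fO_lip : LipschitzWith 1 fO := by
  apply LipschitzWith.of_dist_le_mul
  have key : ∀ x y : ℝ, x ≤ y → dist (fO x) (fO y) ≤ 1 * dist x y := by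
    intro x y h
    rw [one_mul, Real.dist_eq, Real.dist_eq, abs_sub_comm, abs_sub_comm x y,
      abs_of_nonneg (sub_nonneg.2 (fO_mono h)), abs_of_nonneg (sub_nonneg.2 h)]
    have := sub_fO_mono h
    simp only at this
    linarith
  intro x y
  rcases le_total x y with h | h
  · exact key x y h
  · rw [dist_comm, dist_comm x y]; exact key y x h

lemma fO_top : Tendsto fO atTop (nhds 1) := by
  have h0 : Tendsto (fun x : ℝ => 1/(16*x)) atTop (nhds 0) := by
    simp only [one_div]
    exact tendsto_inv_atTop_zero.comp (Tendsto.const_mul_atTop (by norm_num) tendsto_id)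
  have h1 : Tendsto (fun x : ℝ => 1 - 1/(16*x)) atTop (nhds 1) := by
    simpa using tendsto_const_nhds.sub h0
  refine h1.congr' ?_
  filter_upwards [eventually_gt_atTop (1/4:ℝ)] with x hx
  exact (fO_right hx).symm

lemma fO_bot : Tendsto fO atBot (nhds 0) := by
  have h1 : Tendsto (fun x : ℝ => 1 - fO (-x)) atBot (nhds 0) := by
    have h2 : Tendsto (fun x : ℝ => fO (-x)) atBot (nhds 1) :=
      fO_top.comp tendsto_neg_atBot_atTop
    simpa using h2.const_sub 1
  refine h1.congr ?_
  intro x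
  linarith [fO_sym x]

theorem stmt_10 :
    Continuous fO ∧
    LipschitzWith 1 fO ∧
    Monotone fO ∧
    (∀ x : ℝ, fO x + fO (-x) = 1) ∧
    Tendsto fO atBot (nhds 0) ∧
    Tendsto fO atTop (nhds 1) ∧
    Monotone (fun x : ℝ => x * fO (-x)) ∧
    IsLUB ((fun x : ℝ => x * fO (-x)) '' Set.Ioi 0) (1/16) := by
  refine ⟨fO_lip.continuous, fO_lip, fO_mono, fO_sym, fO_bot, fO_top, g_mono, ?_, ?_⟩
  · rintro v ⟨x, hx, rfl⟩
    simp only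
    rcases le_or_gt x (1/4) with hx2 | hx2
    · rw [gM (by simp at hx; linarith) hx2]
      nlinarith [sq_nonneg (x - 1/4)]
    · rw [gP hx2]
  · intro b hb
    exact hb ⟨1/2, by norm_num [Set.mem_Ioi], by simpa using gP (by norm_num : (1/4:ℝ) < 1/2)⟩
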